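/- For the ADMM scheme on min r(x) + l(y) s.t. x = y with r coercive + l having L-Lipschitz gradient: if δ > L, then L_δ(x^k, y^k, u^k) ≥ r(x^k) + l(x^k) + ((δ - L)/2)‖x^k - y^k‖₂² for all k, using δu^k = ∇l(y^k). In particular, if r(x) + l(x) is coercive and bounded below, the augmented Lagrangian values are bounded below along the iteration. -/

import Mathlib

open Finset Filter Set
open scoped RealInnerProductSpace

noncomputable def norm1 {N : ℕ} (x : EuclideanSpace ℝ (Fin N)) : ℝ := ∑ i, |x i|

noncomputable def normInf {N : ℕ} (x : EuclideanSpace ℝ (Fin N)) : ℝ := ⨆ i, |x i|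

noncomputable def Fobj {N : ℕ} (a lam : ℝ) (y x : EuclideanSpace ℝ (Fin N)) : ℝ :=
  norm1 x - a * ‖x‖ + 1 / (2 * lam) * ‖x - y‖ ^ 2
/-- Augmented Lagrangian for the ADMM splitting of  min r(x) + l(y)  s.t.  x = y. -/
noncomputable def ALag {N : ℕ} (r l : EuclideanSpace ℝ (Fin N) → ℝ) (del : ℝ)
    (x y u : EuclideanSpace ℝ (Fin N)) : ℝ :=
  r x + l y + del * (inner ℝ u (x - y) : ℝ) + del / 2 * ‖x - y‖ ^ 2

open intervalIntegral in
lemma descent {N : ℕ} (L : ℝ) (hL : 0 ≤ L)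
    (l : EuclideanSpace ℝ (Fin N) → ℝ)
    (g : EuclideanSpace ℝ (Fin N) → EuclideanSpace ℝ (Fin N))
    (hg : ∀ z, HasGradientAt l (g z) z)
    (hLip : ∀ z w, ‖g z - g w‖ ≤ L * ‖z - w‖)
    (x y : EuclideanSpace ℝ (Fin N)) :
    l x ≤ l y + inner ℝ (g y) (x - y) + L / 2 * ‖x - y‖ ^ 2 := by
  set v := x - y with hv
  have hcont : Continuous g := by
    have : LipschitzWith (Real.toNNReal L) g := by
      apply LipschitzWith.of_dist_le_mul
      intro z w
      simpa [dist_eq_norm, Real.coe_toNNReal L hL] using hLip z w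
    exact this.continuous
  have hderiv : ∀ t : ℝ, HasDerivAt (fun t : ℝ => l (y + t • v))
      (inner ℝ (g (y + t • v)) v : ℝ) t := by
    intro t
    have hc : HasDerivAt (fun t : ℝ => y + t • v) v t := by
      simpa using ((hasDerivAt_id t).smul_const v).const_add y
    have := (hg (y + t • v)).hasFDerivAt.comp_hasDerivAt t hc
    simp at this; exact this
  have hcurve : Continuous fun t : ℝ => y + t • v := by continuity
  have hgc : Continuous fun t : ℝ => (inner ℝ (g (y + t • v)) v : ℝ) :=
    (hcont.comp hcurve).inner continuous_const
  have hint : l x - l y = ∫ t in (0:ℝ)..1, (inner ℝ (g (y + t • v)) v : ℝ) := by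
    have := integral_eq_sub_of_hasDerivAt (f := fun t : ℝ => l (y + t • v))
      (fun t _ => hderiv t) (hgc.intervalIntegrable 0 1)
    simpa [hv] using this.symm
  have hbound : ∫ t in (0:ℝ)..1, (inner ℝ (g (y + t • v)) v : ℝ)
      ≤ ∫ t in (0:ℝ)..1, (inner ℝ (g y) v + L * t * ‖v‖ ^ 2) := by
    apply integral_mono_on (by norm_num) (hgc.intervalIntegrable 0 1)
    · exact Continuous.intervalIntegrable
        (continuous_const.add (((continuous_const.mul continuous_id').mul continuous_const))) 0 1
    · intro t ht
      obtain ⟨ht0, ht1⟩ := ht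
      have h1 : (inner ℝ (g (y + t • v)) v : ℝ) - inner ℝ (g y) v
          = inner ℝ (g (y + t • v) - g y) v := by
        rw [inner_sub_left]
      have h2 : (inner ℝ (g (y + t • v) - g y) v : ℝ) ≤ L * t * ‖v‖ ^ 2 := by
        calc (inner ℝ (g (y + t • v) - g y) v : ℝ) ≤ ‖g (y + t • v) - g y‖ * ‖v‖ :=
              real_inner_le_norm _ _
          _ ≤ (L * ‖(y + t • v) - y‖) * ‖v‖ := by
              gcongr; exact hLip _ _
          _ = L * t * ‖v‖ ^ 2 := by
              simp [norm_smul, abs_of_nonneg ht0]; ring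
      linarith
  have hval : ∫ t in (0:ℝ)..1, (inner ℝ (g y) v + L * t * ‖v‖ ^ 2)
      = inner ℝ (g y) v + L / 2 * ‖v‖ ^ 2 := by
    rw [intervalIntegral.integral_add (Continuous.intervalIntegrable continuous_const 0 1)
      ((by fun_prop : Continuous fun t : ℝ => L * t * ‖v‖ ^ 2).intervalIntegrable 0 1)]
    have h3 : (fun t : ℝ => L * t * ‖v‖ ^ 2) = fun t : ℝ => (L * ‖v‖ ^ 2) * t := by
      ext t; ring
    rw [intervalIntegral.integral_const, h3, intervalIntegral.integral_const_mul, integral_id]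
    simp; ring
  nlinarith [hint, hbound, hval]

theorem stmt16 {N : ℕ} (L del : ℝ) (hL : 0 < L) (hdelL : L < del)
    (r l : EuclideanSpace ℝ (Fin N) → ℝ)
    (g : EuclideanSpace ℝ (Fin N) → EuclideanSpace ℝ (Fin N))
    (hg : ∀ z, HasGradientAt l (g z) z)
    (hLip : ∀ z w, ‖g z - g w‖ ≤ L * ‖z - w‖)
    (x y u : ℕ → EuclideanSpace ℝ (Fin N))
    (hgu : ∀ k, del • u k = g (y k)) :
    (∀ k, r (x k) + l (x k) + (del - L) / 2 * ‖x k - y k‖ ^ 2 ≤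
        ALag r l del (x k) (y k) (u k)) ∧
      ((∃ B : ℝ, ∀ z, B ≤ r z + l z) →
        ∃ B : ℝ, ∀ k, B ≤ ALag r l del (x k) (y k) (u k)) := by
  have main : ∀ k, r (x k) + l (x k) + (del - L) / 2 * ‖x k - y k‖ ^ 2 ≤
      ALag r l del (x k) (y k) (u k) := by
    intro k
    have hd := descent L hL.le l g hg hLip (x k) (y k)
    have hinner : del * (inner ℝ (u k) (x k - y k) : ℝ)
        = inner ℝ (g (y k)) (x k - y k) := by
      rw [← hgu k, real_inner_smul_left]
    unfold ALag
    rw [hinner]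
    linarith
  refine ⟨main, fun ⟨B, hB⟩ => ⟨B, fun k => ?_⟩⟩
  have h1 := main k
  have h2 := hB (x k)
  nlinarith [sq_nonneg ‖x k - y k‖, hdelL]
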